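/- For formal power series f, g ∈ t·k[[t]], the induced linear maps on a quasi-shuffle algebra satisfy Ψ_f ∘ Ψ_g = Ψ_{f∘g}, where f∘g denotes composition of power series. -/

import Mathlib

/-!
Quasi-shuffle algebras (Hoffman–Ihara).  We model the span `kA` of the alphabet
(with its commutative associative product `⋄`, written `*` in `L`) as a
non-unital commutative `k`-algebra `L`, and the word algebra `k⟨A⟩` as the
tensor algebra `TensorAlgebra k L`, in which a word `a₁⋯aₙ` is the product
`ι a₁ * ⋯ * ι aₙ`.
-/

open TensorAlgebra

variable (k : Type*) [Field k]
variable {L : Type*} [NonUnitalCommRing L] [Module k L]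
  [SMulCommClass k L L] [IsScalarTower k L L]

/-- The word `a₁⋯aₙ` as an element of the tensor algebra. -/
def word (l : List L) : TensorAlgebra k L := (l.map fun a => TensorAlgebra.ι k a).prod

/-- The `⋄`-product of the letters of a nonempty block (junk value `0` on `[]`). -/
def blockProd : List L → L
  | [] => 0
  | a :: t => t.foldl (· * ·) a

/-- The Hoffman–Ihara operator `Ψ_f` on words, for `f = c₁t + c₂t² + ⋯`:
`Ψ_f(w) = Σ_{(i₁,…,i_m) composition of ℓ(w)} c_{i₁}⋯c_{i_m} I[w]`,
written via the recursion on the first block. -/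
def psi (c : ℕ → k) : List L → TensorAlgebra k L
  | [] => 1
  | a :: w => ∑ j ∈ Finset.range (w.length + 1),
      c (j + 1) • (TensorAlgebra.ι k (blockProd (a :: w.take j)) * psi c (w.drop j))
  termination_by l => l.length
  decreasing_by simp [List.length_drop] <;> omega

/-- Coefficients of the `m`-th power of the power series `g = Σ dₙ tⁿ`. -/
def powCoeff (d : ℕ → k) : ℕ → ℕ → k
  | 0, n => if n = 0 then 1 else 0
  | m + 1, n => ∑ p ∈ Finset.range (n + 1), powCoeff d m p * d (n - p)

/-- Coefficients of the composition `f ∘ g` of power series. -/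
def compCoeff (c d : ℕ → k) (n : ℕ) : k :=
  ∑ m ∈ Finset.range (n + 1), c m * powCoeff k d m n

set_option linter.unusedSectionVars false

-- compositions of n, as a Finset of lists of positive naturals summing to n
def comps : ℕ → Finset (List ℕ)
  | 0 => {[]}
  | n + 1 => (Finset.range (n + 1)).biUnion fun j => (comps (n - j)).image ((j + 1) :: ·)
  termination_by n => n
  decreasing_by omega

lemma comps_sum_eq {M : Type*} [AddCommMonoid M] (n : ℕ) (g : List ℕ → M) :
    ∑ J ∈ comps (n + 1), g J
      = ∑ j ∈ Finset.range (n + 1), ∑ J' ∈ comps (n - j), g ((j + 1) :: J') := by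
  rw [show comps (n+1) = (Finset.range (n + 1)).biUnion
      (fun j => (comps (n - j)).image ((j + 1) :: ·)) from by rw [comps]]
  rw [Finset.sum_biUnion]
  · exact Finset.sum_congr rfl fun j _ => Finset.sum_image (fun a _ b _ h => by
      simpa using h)
  · intro a _ b _ hab
    simp only [Function.onFun, Finset.disjoint_left]
    intro x hx hy
    simp only [Finset.mem_image] at hx hy
    obtain ⟨_, _, rfl⟩ := hx
    obtain ⟨_, _, h⟩ := hy
    injection h with h1 _
    omega

lemma mem_comps {n : ℕ} {I : List ℕ} :
    I ∈ comps n ↔ I.sum = n ∧ ∀ x ∈ I, 0 < x := by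
  induction n using Nat.strong_induction_on generalizing I with
  | _ n ih =>
    match n with
    | 0 =>
      rw [comps]
      constructor
      · rintro h; simp at h; subst h; simp
      · rintro ⟨hs, hp⟩
        cases I with
        | nil => simp
        | cons a I => simp at hs; have := hp a (by simp); omega
    | n + 1 =>
      rw [comps]
      simp only [Finset.mem_biUnion, Finset.mem_image, Finset.mem_range]
      constructor
      · rintro ⟨j, hj, I', hI', rfl⟩
        obtain ⟨hs, hp⟩ := (ih (n - j) (by omega)).1 hI'
        refine ⟨by simp [hs]; omega, ?_⟩
        rintro x hx
        rcases List.mem_cons.1 hx with rfl | hx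
        · omega
        · exact hp x hx
      · rintro ⟨hs, hp⟩
        cases I with
        | nil => simp at hs
        | cons a I' =>
          have ha : 0 < a := hp a (by simp)
          simp at hs
          refine ⟨a - 1, by omega, I', (ih (n - (a-1)) (by omega)).2 ⟨by omega, fun x hx => hp x (by simp [hx])⟩, by congr 1; omega⟩

def chunksW : List ℕ → List L → List L
  | [], _ => []
  | i :: I, w => blockProd (w.take i) :: chunksW I (w.drop i)

def coeff (f : ℕ → k) (I : List ℕ) : k := (I.map f).prod

@[simp] lemma coeff_nil (f : ℕ → k) : coeff k f [] = 1 := by simp [coeff]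
@[simp] lemma coeff_cons (f : ℕ → k) (i : ℕ) (I : List ℕ) :
    coeff k f (i :: I) = f i * coeff k f I := by simp [coeff]
lemma coeff_append (f : ℕ → k) (I J : List ℕ) :
    coeff k f (I ++ J) = coeff k f I * coeff k f J := by simp [coeff]

@[simp] lemma word_nil : word k ([] : List L) = 1 := by simp [word]
@[simp] lemma word_cons (a : L) (l : List L) :
    word k (a :: l) = TensorAlgebra.ι k a * word k l := by simp [word]

@[simp] lemma length_chunksW (I : List ℕ) (w : List L) :
    (chunksW I w).length = I.length := by
  induction I generalizing w with
  | nil => rfl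
  | cons i I ih => simp [chunksW, ih]

lemma chunksW_take (I : List ℕ) (w : List L) (i : ℕ) :
    (chunksW I w).take i = chunksW (I.take i) w := by
  induction I generalizing w i with
  | nil => simp [chunksW]
  | cons j I ih =>
    cases i with
    | zero => simp [chunksW]
    | succ i => simp [chunksW, ih]

lemma chunksW_drop (I : List ℕ) (w : List L) (i : ℕ) :
    (chunksW I w).drop i = chunksW (I.drop i) (w.drop (I.take i).sum) := by
  induction I generalizing w i with
  | nil => simp [chunksW]
  | cons j I ih =>
    cases i with
    | zero => simp [chunksW]
    | succ i => simp [chunksW, ih, List.drop_drop, Nat.add_comm]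

lemma mul_foldl (l : List L) (x y : L) :
    x * l.foldl (· * ·) y = l.foldl (· * ·) (x * y) := by
  induction l generalizing y with
  | nil => rfl
  | cons a l ih => simp only [List.foldl_cons, ih, mul_assoc]

lemma blockProd_cons_ne_nil (x : L) (l : List L) (hl : l ≠ []) :
    blockProd (x :: l) = x * blockProd l := by
  cases l with
  | nil => exact absurd rfl hl
  | cons y l => simp only [blockProd, List.foldl_cons, mul_foldl]

lemma blockProd_append (l₁ l₂ : List L) (h₁ : l₁ ≠ []) :
    blockProd (l₁ ++ l₂) = l₂.foldl (· * ·) (blockProd l₁) := by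
  cases l₁ with
  | nil => exact absurd rfl h₁
  | cons a l₁ => simp [blockProd, List.foldl_append]

lemma blockProd_cons_append (a : L) (l : List L) (b : L) (m : List L) :
    blockProd (a :: (l ++ b :: m)) = blockProd (a :: l) * blockProd (b :: m) := by
  simp [blockProd, List.foldl_append, mul_foldl]

-- key: merging the first outer block with inner chunks
lemma blockProd_chunksW (J : List ℕ) (a : L) (l u : List L)
    (hp : ∀ x ∈ J, 0 < x) (hs : J.sum ≤ u.length) :
    blockProd (blockProd (a :: l) :: chunksW J u)
      = blockProd (a :: (l ++ u.take J.sum)) := by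
  induction J generalizing l u with
  | nil => simp [chunksW, blockProd]
  | cons i J ih =>
    have hi : 0 < i := hp i (by simp)
    simp only [chunksW, List.sum_cons] at hs ⊢
    obtain ⟨b, m, hu⟩ : ∃ b m, u.take i = b :: m := by
      cases hu : u.take i with
      | nil =>
        rw [List.take_eq_nil_iff] at hu
        rcases hu with h | h
        · omega
        · subst h; simp at hs; omega
      | cons b m => exact ⟨b, m, rfl⟩
    have step : blockProd (a :: l) * blockProd (u.take i)
        = blockProd (a :: (l ++ u.take i)) := by
      rw [hu, blockProd_cons_append]
    calc blockProd (blockProd (a :: l) :: blockProd (u.take i) :: chunksW J (u.drop i))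
        = blockProd ((blockProd (a :: l) * blockProd (u.take i)) :: chunksW J (u.drop i)) := by
          rw [hu]; simp [blockProd]
      _ = blockProd (blockProd (a :: (l ++ u.take i)) :: chunksW J (u.drop i)) := by rw [step]
      _ = blockProd (a :: ((l ++ u.take i) ++ (u.drop i).take J.sum)) :=
          ih _ _ (fun x hx => hp x (by simp [hx])) (by simp [List.length_drop]; omega)
      _ = _ := by
          rw [List.append_assoc, ← List.take_add]

lemma psi_nil (f : ℕ → k) : psi k f ([] : List L) = 1 := by rw [psi]

lemma psi_cons (f : ℕ → k) (a : L) (w : List L) :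
    psi k f (a :: w) = ∑ j ∈ Finset.range (w.length + 1),
      f (j + 1) • (TensorAlgebra.ι k (blockProd (a :: w.take j)) * psi k f (w.drop j)) := by
  rw [psi]

lemma psi_eq_sum (f : ℕ → k) : ∀ (n : ℕ) (w : List L), w.length = n →
    psi k f w = ∑ J ∈ comps n, coeff k f J • word k (chunksW J w) := by
  intro n
  induction n using Nat.strong_induction_on with
  | _ n ih =>
    intro w hw
    cases w with
    | nil =>
      simp only [List.length_nil] at hw
      subst hw
      rw [psi_nil, comps]
      simp [chunksW]
    | cons a t =>
      simp only [List.length_cons] at hw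
      subst hw
      rw [psi_cons, comps_sum_eq]
      apply Finset.sum_congr rfl
      intro j hj
      simp only [Finset.mem_range] at hj
      rw [ih (t.length - j) (by omega) (t.drop j) (by simp)]
      rw [Finset.mul_sum, Finset.smul_sum]
      apply Finset.sum_congr rfl
      intro J' _
      simp only [chunksW, List.take_succ_cons, List.drop_succ_cons, coeff_cons,
        word_cons, mul_smul_comm, smul_smul]

section Tri
variable {M : Type*} [AddCommMonoid M]

lemma tri (F : ℕ → ℕ → M) : ∀ (m : ℕ),
    ∑ j ∈ Finset.range (m + 1), ∑ s ∈ Finset.range (m + 1 - j), F j s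
      = ∑ t ∈ Finset.range (m + 1), ∑ j ∈ Finset.range (t + 1), F j (t - j) := by
  intro m
  induction m with
  | zero => simp
  | succ m ih =>
    have peel : ∀ j ∈ Finset.range (m + 2),
        ∑ s ∈ Finset.range (m + 2 - j), F j s
          = (∑ s ∈ Finset.range (m + 1 - j), F j s) + (if j ≤ m + 1 then F j (m + 1 - j) else 0) := by
      intro j hj
      simp only [Finset.mem_range] at hj
      rw [if_pos (by omega), show m + 2 - j = (m + 1 - j) + 1 by omega, Finset.sum_range_succ]
    rw [Finset.sum_congr rfl peel, Finset.sum_add_distrib]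
    rw [Finset.sum_range_succ (fun j => ∑ s ∈ Finset.range (m + 1 - j), F j s)]
    simp only [Nat.sub_self, Finset.range_zero, Finset.sum_empty, add_zero]
    rw [ih, Finset.sum_ite_of_true (by intro j hj; simp at hj; omega)]
    exact (Finset.sum_range_succ _ (m + 1)).symm

lemma cut {M : Type*} [AddCommMonoid M] : ∀ (m : ℕ) (f : List ℕ → List ℕ → M),
    (∑ J ∈ comps m, ∑ i ∈ Finset.range (J.length + 1), f (J.take i) (J.drop i))
      = ∑ s ∈ Finset.range (m + 1), ∑ J₁ ∈ comps s, ∑ J₂ ∈ comps (m - s), f J₁ J₂ := by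
  intro m
  induction m using Nat.strong_induction_on with
  | _ m ih =>
    intro f
    match m with
    | 0 => simp [comps]
    | Nat.succ m =>
      set N : M := (∑ t ∈ Finset.range (m + 1), ∑ j ∈ Finset.range (t + 1),
          ∑ J₁ ∈ comps (t - j), ∑ J₂ ∈ comps (m - t), f ((j + 1) :: J₁) J₂)
          + ∑ J ∈ comps (m + 1), f [] J with hN
      have hL : (∑ J ∈ comps (m + 1), ∑ i ∈ Finset.range (J.length + 1),
          f (J.take i) (J.drop i)) = N := by
        rw [comps_sum_eq]
        have inner : ∀ j ∈ Finset.range (m + 1), ∀ J' ∈ comps (m - j),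
            (∑ i ∈ Finset.range (((j+1) :: J').length + 1),
                f (((j+1) :: J').take i) (((j+1) :: J').drop i))
              = (∑ i ∈ Finset.range (J'.length + 1), f ((j+1) :: J'.take i) (J'.drop i))
                + f [] ((j+1) :: J') := by
          intro j _ J' _
          rw [List.length_cons, Finset.sum_range_succ']
          simp
        rw [Finset.sum_congr rfl fun j hj => Finset.sum_congr rfl (inner j hj)]
        rw [Finset.sum_congr rfl fun j hj => Finset.sum_add_distrib]
        rw [Finset.sum_add_distrib]
        congr 1
        · -- A part
          have step : ∀ j ∈ Finset.range (m + 1),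
              (∑ J' ∈ comps (m - j), ∑ i ∈ Finset.range (J'.length + 1),
                f ((j+1) :: J'.take i) (J'.drop i))
                = ∑ s ∈ Finset.range (m + 1 - j), ∑ J₁ ∈ comps s,
                    ∑ J₂ ∈ comps (m - j - s), f ((j+1) :: J₁) J₂ := by
            intro j hj
            simp only [Finset.mem_range] at hj
            rw [ih (m - j) (by omega) (fun X Y => f ((j+1) :: X) Y)]
            rw [show m - j + 1 = m + 1 - j by omega]
          rw [Finset.sum_congr rfl step]
          rw [tri (fun j s => ∑ J₁ ∈ comps s, ∑ J₂ ∈ comps (m - j - s), f ((j+1) :: J₁) J₂) m]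
          apply Finset.sum_congr rfl
          intro t ht
          apply Finset.sum_congr rfl
          intro j hj
          simp only [Finset.mem_range] at ht hj
          rw [show m - j - (t - j) = m - t by omega]
        · exact (comps_sum_eq m fun J => f [] J).symm
      have hR : (∑ s ∈ Finset.range (m + 1 + 1), ∑ J₁ ∈ comps s,
          ∑ J₂ ∈ comps (m + 1 - s), f J₁ J₂) = N := by
        rw [Finset.sum_range_succ']
        congr 1
        · apply Finset.sum_congr rfl
          intro s hs
          simp only [Finset.mem_range] at hs
          rw [show m + 1 - (s + 1) = m - s by omega, comps_sum_eq]
        · rw [show comps 0 = {([] : List ℕ)} by rw [comps]]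
          simp
      rw [hL, ← hR]

lemma powCoeff_zero_lt (d : ℕ → k) (hd : d 0 = 0) : ∀ (m n : ℕ), n < m → powCoeff k d m n = 0 := by
  intro m
  induction m with
  | zero => intro n hn; omega
  | succ m ih =>
    intro n hn
    rw [powCoeff]
    apply Finset.sum_eq_zero
    intro p hp
    simp only [Finset.mem_range] at hp
    by_cases h : p < m
    · rw [ih p h, zero_mul]
    · rw [show n - p = 0 by omega, hd, mul_zero]

lemma powCoeff_succ' (d : ℕ → k) : ∀ (m n : ℕ),
    powCoeff k d (m + 1) n = ∑ q ∈ Finset.range (n + 1), d q * powCoeff k d m (n - q) := by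
  intro m
  induction m with
  | zero =>
    intro n
    rw [powCoeff]
    rw [Finset.sum_eq_single 0 (fun p hp hne => by
      rw [show powCoeff k d 0 p = 0 by rw [powCoeff]; simp [hne], zero_mul])
      (by intro h; simp at h)]
    rw [Finset.sum_eq_single n (fun q hq hne => by
      simp only [Finset.mem_range] at hq
      rw [show powCoeff k d 0 (n - q) = 0 by rw [powCoeff]; simp; omega, mul_zero])
      (by intro h; simp at h)]
    simp [powCoeff]
  | succ m ih =>
    intro n
    rw [show powCoeff k d (m + 1 + 1) n
        = ∑ p ∈ Finset.range (n + 1), powCoeff k d (m + 1) p * d (n - p) by rw [powCoeff]]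
    have expand : ∀ p ∈ Finset.range (n + 1),
        powCoeff k d (m + 1) p * d (n - p)
          = ∑ q ∈ Finset.range (p + 1), d q * powCoeff k d m (p - q) * d (n - p) := by
      intro p _
      rw [ih p, Finset.sum_mul]
    rw [Finset.sum_congr rfl expand]
    have h2 := tri (fun q r => d q * powCoeff k d m r * d (n - q - r)) n
    have h1 : (∑ p ∈ Finset.range (n + 1), ∑ q ∈ Finset.range (p + 1),
        d q * powCoeff k d m (p - q) * d (n - p))
          = ∑ t ∈ Finset.range (n + 1), ∑ j ∈ Finset.range (t + 1),
            d j * powCoeff k d m (t - j) * d (n - j - (t - j)) := by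
      apply Finset.sum_congr rfl
      intro p hp
      apply Finset.sum_congr rfl
      intro q hq
      simp only [Finset.mem_range] at hp hq
      rw [show n - q - (p - q) = n - p by omega]
    rw [h1, ← h2]
    apply Finset.sum_congr rfl
    intro q hq
    simp only [Finset.mem_range] at hq
    rw [show powCoeff k d (m + 1) (n - q)
        = ∑ p ∈ Finset.range (n - q + 1), powCoeff k d m p * d (n - q - p) by rw [powCoeff]]
    rw [Finset.mul_sum, show n + 1 - q = n - q + 1 by omega]
    apply Finset.sum_congr rfl
    intro s _
    ring

lemma sum_comps_length (d : ℕ → k) (hd : d 0 = 0) : ∀ (s : ℕ) (h : ℕ → k),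
    (∑ J ∈ comps s, h J.length * coeff k d J)
      = ∑ i ∈ Finset.range (s + 1), h i * powCoeff k d i s := by
  intro s
  induction s using Nat.strong_induction_on with
  | _ s ih =>
    intro h
    match s with
    | 0 => rw [show comps 0 = {([] : List ℕ)} by rw [comps]]; simp [powCoeff]
    | Nat.succ s =>
      rw [comps_sum_eq]
      have lhs_eq : ∀ j ∈ Finset.range (s + 1),
          (∑ J' ∈ comps (s - j), h ((j+1) :: J').length * coeff k d ((j+1) :: J'))
            = ∑ i ∈ Finset.range (s + 1), d (j + 1) * (h (i + 1) * powCoeff k d i (s - j)) := by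
        intro j hj
        simp only [Finset.mem_range] at hj
        have : (∑ J' ∈ comps (s - j), h ((j+1) :: J').length * coeff k d ((j+1) :: J'))
            = d (j + 1) * ∑ J' ∈ comps (s - j), h (J'.length + 1) * coeff k d J' := by
          rw [Finset.mul_sum]
          apply Finset.sum_congr rfl
          intro J' _
          rw [coeff_cons, List.length_cons]
          ring
        rw [this, ih (s - j) (by omega) (fun i => h (i + 1)), Finset.mul_sum]
        apply Finset.sum_subset (by intro x hx; simp at hx ⊢; omega)
        intro i hi hni
        simp only [Finset.mem_range] at hi hni
        rw [powCoeff_zero_lt k d hd i (s - j) (by omega), mul_zero, mul_zero]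
      have rhs_eq : (∑ i ∈ Finset.range (s + 1 + 1), h i * powCoeff k d i (s + 1))
          = ∑ j ∈ Finset.range (s + 1), ∑ i ∈ Finset.range (s + 1),
              d (j + 1) * (h (i + 1) * powCoeff k d i (s - j)) := by
        rw [Finset.sum_range_succ']
        rw [show h 0 * powCoeff k d 0 (s + 1) = 0 by rw [powCoeff]; simp, add_zero]
        rw [Finset.sum_comm]
        apply Finset.sum_congr rfl
        intro i _
        rw [powCoeff_succ', Finset.sum_range_succ', hd, zero_mul, add_zero,
          Finset.mul_sum]
        apply Finset.sum_congr rfl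
        intro j _
        rw [show s + 1 - (j + 1) = s - j by omega]
        ring
      rw [Finset.sum_congr rfl lhs_eq, rhs_eq]

def eplus (c d : ℕ → k) (s : ℕ) : k := ∑ i ∈ Finset.range (s + 1), c (i + 1) * powCoeff k d i s

lemma conv (c d : ℕ → k) (hc : c 0 = 0) (hd : d 0 = 0) (p : ℕ) :
    ∑ j ∈ Finset.range (p + 1), d (j + 1) * eplus k c d (p - j)
      = compCoeff k c d (p + 1) := by
  have rhs : compCoeff k c d (p + 1)
      = ∑ j ∈ Finset.range (p + 1), ∑ i ∈ Finset.range (p + 1),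
          d (j + 1) * (c (i + 1) * powCoeff k d i (p - j)) := by
    rw [compCoeff, Finset.sum_range_succ', hc, zero_mul, add_zero]
    have : ∀ i ∈ Finset.range (p + 1), c (i + 1) * powCoeff k d (i + 1) (p + 1)
        = ∑ j ∈ Finset.range (p + 1), d (j + 1) * (c (i + 1) * powCoeff k d i (p - j)) := by
      intro i _
      rw [powCoeff_succ', Finset.sum_range_succ', hd, zero_mul, add_zero, Finset.mul_sum]
      apply Finset.sum_congr rfl
      intro j _
      rw [show p + 1 - (j + 1) = p - j by omega]
      ring
    rw [Finset.sum_congr rfl this, Finset.sum_comm]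
  rw [rhs]
  apply Finset.sum_congr rfl
  intro j hj
  simp only [Finset.mem_range] at hj
  rw [eplus, Finset.mul_sum]
  apply Finset.sum_subset (by intro x hx; simp at hx ⊢; omega)
  intro i hi hni
  simp only [Finset.mem_range] at hi hni
  rw [powCoeff_zero_lt k d hd i (p - j) (by omega), mul_zero, mul_zero]

lemma main_key (c d : ℕ → k) (hc : c 0 = 0) (hd : d 0 = 0)
    (F : TensorAlgebra k L →ₗ[k] TensorAlgebra k L)
    (hF : ∀ w : List L, F (word k w) = psi k c w) :
    ∀ (N : ℕ) (w : List L), w.length = N →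
      F (psi k d w) = psi k (compCoeff k c d) w := by
  intro N
  induction N using Nat.strong_induction_on with
  | _ N ih =>
    intro w hw
    cases w with
    | nil =>
      rw [psi_nil k d, psi_nil k (compCoeff k c d), ← word_nil k, hF, psi_nil, word_nil]
    | cons a t =>
      simp only [List.length_cons] at hw
      subst hw
      set n := t.length with hn
      set e := compCoeff k c d with he
      -- the per-pair summand after full expansion
      set Φ : ℕ → List ℕ → List ℕ → TensorAlgebra k L := fun j X Y =>
        (d (j + 1) * coeff k d X * coeff k d Y * c (X.length + 1)) •
          (TensorAlgebra.ι k (blockProd (a :: t.take (j + X.sum))) *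
            psi k c (chunksW Y (t.drop (j + X.sum)))) with hΦ
      have h1 : F (psi k d (a :: t))
          = ∑ J ∈ comps (n + 1), coeff k d J • psi k c (chunksW J (a :: t)) := by
        rw [psi_eq_sum k d (n + 1) (a :: t) (by simp [hn]), map_sum]
        exact Finset.sum_congr rfl fun J _ => by rw [map_smul, hF]
      have h2 : F (psi k d (a :: t))
          = ∑ j ∈ Finset.range (n + 1), ∑ J' ∈ comps (n - j),
              (d (j + 1) * coeff k d J') •
                psi k c (blockProd (a :: t.take j) :: chunksW J' (t.drop j)) := by
        rw [h1, comps_sum_eq]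
        apply Finset.sum_congr rfl
        intro j _
        apply Finset.sum_congr rfl
        intro J' _
        rw [coeff_cons]
        congr 1
      have h3 : ∀ j ∈ Finset.range (n + 1), ∀ J' ∈ comps (n - j),
          (d (j + 1) * coeff k d J') •
              psi k c (blockProd (a :: t.take j) :: chunksW J' (t.drop j))
            = ∑ i ∈ Finset.range (J'.length + 1), Φ j (J'.take i) (J'.drop i) := by
        intro j hj J' hJ'
        simp only [Finset.mem_range] at hj
        obtain ⟨hJs, hJp⟩ := mem_comps.1 hJ'
        rw [psi_cons, length_chunksW, Finset.smul_sum]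
        apply Finset.sum_congr rfl
        intro i hi
        simp only [Finset.mem_range] at hi
        have hilen : (J'.take i).length = i := by rw [List.length_take]; omega
        have hsum_take : (J'.take i).sum ≤ J'.sum := by
          conv_rhs => rw [← List.take_append_drop i J']
          rw [List.sum_append]
          omega
        rw [chunksW_take, chunksW_drop]
        rw [blockProd_chunksW (J'.take i) a (t.take j) (t.drop j)
          (fun x hx => hJp x (List.mem_of_mem_take hx))
          (by rw [List.length_drop]; omega)]
        rw [← List.take_add]
        rw [List.drop_drop]
        rw [hΦ]
        simp only []
        rw [hilen]
        conv_lhs => rw [show coeff k d J' = coeff k d (J'.take i) * coeff k d (J'.drop i) by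
          rw [← coeff_append, List.take_append_drop]]
        rw [smul_smul]
        congr 1
        ring
      have h4 : F (psi k d (a :: t))
          = ∑ j ∈ Finset.range (n + 1), ∑ s ∈ Finset.range (n - j + 1),
              ∑ J₁ ∈ comps s, ∑ J₂ ∈ comps (n - j - s), Φ j J₁ J₂ := by
        rw [h2, Finset.sum_congr rfl fun j hj => Finset.sum_congr rfl (h3 j hj)]
        exact Finset.sum_congr rfl fun j hj => cut (n - j) (Φ j)
      -- collapse the inner double sum
      have h5 : ∀ j ∈ Finset.range (n + 1), ∀ s ∈ Finset.range (n - j + 1),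
          (∑ J₁ ∈ comps s, ∑ J₂ ∈ comps (n - j - s), Φ j J₁ J₂)
            = (d (j + 1) * eplus k c d s) •
                (TensorAlgebra.ι k (blockProd (a :: t.take (j + s))) *
                  psi k e (t.drop (j + s))) := by
        intro j hj s hs
        simp only [Finset.mem_range] at hj hs
        have tail : (∑ J₂ ∈ comps (n - j - s),
            coeff k d J₂ • psi k c (chunksW J₂ (t.drop (j + s))))
              = psi k e (t.drop (j + s)) := by
          have hlen : (t.drop (j + s)).length = n - j - s := by
            rw [List.length_drop]; omega
          have : (∑ J₂ ∈ comps (n - j - s),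
              coeff k d J₂ • psi k c (chunksW J₂ (t.drop (j + s))))
                = F (psi k d (t.drop (j + s))) := by
            rw [psi_eq_sum k d (n - j - s) (t.drop (j + s)) hlen, map_sum]
            exact (Finset.sum_congr rfl fun J _ => by rw [map_smul, hF]).symm
          rw [this, ih (n - j - s) (by omega) (t.drop (j + s)) hlen]
        have step1 : ∀ J₁ ∈ comps s,
            (∑ J₂ ∈ comps (n - j - s), Φ j J₁ J₂)
              = (d (j + 1) * coeff k d J₁ * c (J₁.length + 1)) •
                  (TensorAlgebra.ι k (blockProd (a :: t.take (j + s))) *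
                    psi k e (t.drop (j + s))) := by
          intro J₁ hJ₁
          have hsum : J₁.sum = s := (mem_comps.1 hJ₁).1
          rw [← tail, Finset.mul_sum, Finset.smul_sum]
          apply Finset.sum_congr rfl
          intro J₂ _
          rw [hΦ]
          simp only [hsum]
          rw [mul_smul_comm, smul_smul]
          congr 1
          ring
        rw [Finset.sum_congr rfl step1, ← Finset.sum_smul]
        congr 1
        rw [eplus, ← sum_comps_length k d hd s (fun m => c (m + 1)), Finset.mul_sum]
        apply Finset.sum_congr rfl
        intro J₁ _
        ring
      have h6 : F (psi k d (a :: t))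
          = ∑ p ∈ Finset.range (n + 1),
              (∑ j ∈ Finset.range (p + 1), d (j + 1) * eplus k c d (p - j)) •
                (TensorAlgebra.ι k (blockProd (a :: t.take p)) * psi k e (t.drop p)) := by
        rw [h4, Finset.sum_congr rfl fun j hj => Finset.sum_congr rfl (h5 j hj)]
        have ranges : ∀ j ∈ Finset.range (n + 1),
            Finset.range (n - j + 1) = Finset.range (n + 1 - j) := by
          intro j hj
          simp only [Finset.mem_range] at hj
          congr 1
          omega
        rw [Finset.sum_congr rfl fun j hj => Finset.sum_congr (ranges j hj) fun s _ => rfl]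
        rw [tri (fun j s => (d (j + 1) * eplus k c d s) •
          (TensorAlgebra.ι k (blockProd (a :: t.take (j + s))) * psi k e (t.drop (j + s)))) n]
        apply Finset.sum_congr rfl
        intro p hp
        rw [Finset.sum_smul]
        apply Finset.sum_congr rfl
        intro j hj
        simp only [Finset.mem_range] at hp hj
        rw [show j + (p - j) = p by omega]
      rw [h6, psi_cons]
      apply Finset.sum_congr rfl
      intro p hp
      rw [conv k c d hc hd p]

lemma word_append (p q : List L) : word k (p ++ q) = word k p * word k q := by
  simp [word, List.map_append]

lemma mul_mem_span (x y : TensorAlgebra k L)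
    (hx : x ∈ Submodule.span k (Set.range (word k : List L → TensorAlgebra k L)))
    (hy : y ∈ Submodule.span k (Set.range (word k : List L → TensorAlgebra k L))) :
    x * y ∈ Submodule.span k (Set.range (word k : List L → TensorAlgebra k L)) := by
  induction hy using Submodule.span_induction with
  | mem v hv =>
    obtain ⟨q, rfl⟩ := hv
    induction hx using Submodule.span_induction with
    | mem u hu =>
      obtain ⟨p, rfl⟩ := hu
      rw [← word_append]
      exact Submodule.subset_span ⟨p ++ q, rfl⟩
    | zero => rw [zero_mul]; exact Submodule.zero_mem _
    | add u v _ _ hu hv => rw [add_mul]; exact Submodule.add_mem _ hu hv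
    | smul r u _ hu => rw [smul_mul_assoc]; exact Submodule.smul_mem _ _ hu
  | zero => rw [mul_zero]; exact Submodule.zero_mem _
  | add u v _ _ hu hv => rw [mul_add]; exact Submodule.add_mem _ hu hv
  | smul r u _ hu => rw [mul_smul_comm]; exact Submodule.smul_mem _ _ hu

lemma span_words : Submodule.span k (Set.range (word k : List L → TensorAlgebra k L)) = ⊤ := by
  rw [Submodule.eq_top_iff']
  intro x
  induction x using TensorAlgebra.induction with
  | algebraMap r =>
    rw [Algebra.algebraMap_eq_smul_one, ← word_nil k]
    exact Submodule.smul_mem _ _ (Submodule.subset_span ⟨[], rfl⟩)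
  | ι x =>
    have : TensorAlgebra.ι k x = word k [x] := by rw [word_cons, word_nil, mul_one]
    rw [this]
    exact Submodule.subset_span ⟨[x], rfl⟩
  | mul x y hx hy => exact mul_mem_span k x y hx hy
  | add x y hx hy => exact Submodule.add_mem _ hx hy

/--
Hoffman–Ihara, Thm 3.1.  For `f, g ∈ t·k[[t]]`, the induced
linear maps satisfy `Ψ_f ∘ Ψ_g = Ψ_{f∘g}`.  Here `F, G, H` are the linear
extensions of `Ψ_f, Ψ_g, Ψ_{f∘g}` (given on words by `psi`).
-/
theorem stmt4 (c d : ℕ → k) (hc : c 0 = 0) (hd : d 0 = 0)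
    (F G H : TensorAlgebra k L →ₗ[k] TensorAlgebra k L)
    (hF : ∀ w : List L, F (word k w) = psi k c w)
    (hG : ∀ w : List L, G (word k w) = psi k d w)
    (hH : ∀ w : List L, H (word k w) = psi k (compCoeff k c d) w) :
    ∀ x : TensorAlgebra k L, F (G x) = H x := by
  intro x
  have hx : x ∈ Submodule.span k (Set.range (word k : List L → TensorAlgebra k L)) := by
    rw [span_words]; trivial
  induction hx using Submodule.span_induction with
  | mem u hu =>
    obtain ⟨w, rfl⟩ := hu
    rw [hG, hH, main_key k c d hc hd F hF w.length w rfl]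
  | zero => simp
  | add u v _ _ hu hv => simp [map_add, hu, hv]
  | smul r u _ hu => simp [map_smul, hu]
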